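/- Let C ⊂ [0,1] be the Cantor set and X := (2πC ∪ (2πC + 2π)) \ {0, 4π} ⊂ (0, 4π). Let θ : ℝ → S¹ be θ(t) = (cos t, sin t) and σ : X → θ(X) its restriction. Then σ is a surjective local homeomorphism but not a covering map. -/

import Mathlib

open Real Set Filter Topology

lemma one_mem_preCantorSet (n : ℕ) : (1:ℝ) ∈ preCantorSet n := by
  induction n with
  | zero => exact ⟨zero_le_one, le_refl 1⟩
  | succ n ih => exact Or.inr ⟨1, ih, by norm_num⟩

lemma one_mem_cantorSet : (1:ℝ) ∈ cantorSet := Set.mem_iInter.mpr one_mem_preCantorSet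

lemma cantorSet_div_three {x : ℝ} (hx : x ∈ cantorSet) : x / 3 ∈ cantorSet := by
  have hx' := hx
  rw [cantorSet, Set.mem_iInter] at hx' ⊢
  intro n
  match n with
  | 0 =>
    have h := hx' 0
    simp only [preCantorSet_zero, Set.mem_Icc] at h ⊢
    constructor <;> nlinarith [h.1, h.2]
  | (n+1) => exact Or.inl ⟨x, hx' n, rfl⟩

lemma pow_three_inv_mem_cantorSet (n : ℕ) : ((3:ℝ)⁻¹) ^ n ∈ cantorSet := by
  induction n with
  | zero => simpa using one_mem_cantorSet
  | succ n ih =>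
    have h : ((3:ℝ)⁻¹) ^ (n+1) = ((3:ℝ)⁻¹) ^ n / 3 := by rw [pow_succ]; ring
    rw [h]
    exact cantorSet_div_three ih

lemma exp_eq_cases {s t : ℝ} (hs : s ∈ Set.Ioo 0 (4*π)) (ht : t ∈ Set.Ioo 0 (4*π))
    (h : Circle.exp s = Circle.exp t) : s = t ∨ s = t + 2*π ∨ s = t - 2*π := by
  obtain ⟨m, hm⟩ := Circle.exp_eq_exp.mp h
  have hπ : 0 < π := Real.pi_pos
  have hb1 : (-2:ℝ) < (m:ℝ) := by nlinarith [hs.1, ht.2]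
  have hb2 : ((m:ℝ)) < 2 := by nlinarith [hs.2, ht.1]
  have hz1 : (-2:ℤ) < m := by exact_mod_cast hb1
  have hz2 : m < 2 := by exact_mod_cast hb2
  have : m = -1 ∨ m = 0 ∨ m = 1 := by omega
  rcases this with rfl | rfl | rfl
  · right; right; push_cast at hm; linarith
  · left; push_cast at hm; linarith
  · right; left; push_cast at hm; linarith

lemma key_open (X : Set ℝ)
    (hXsub : X ⊆ Set.Ioo 0 (4*π))
    (hup : ∀ x ∈ X, 2*π < x → x - 2*π ∈ X)
    (hdown : ∀ x ∈ X, x < 2*π → x + 2*π ∈ X)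
    (V : Set ℝ) (hV : V ⊆ Set.Ioo 0 (4*π)) :
    Circle.exp '' (X ∩ V) = (Circle.exp '' X) ∩ Circle.exp ''
      (V ∪ ((fun t => t + 2*π) '' V ∩ Set.Ioo (2*π) (4*π))
         ∪ ((fun t => t - 2*π) '' V ∩ Set.Ioo 0 (2*π))) := by
  have hπ : 0 < π := Real.pi_pos
  ext y
  constructor
  · rintro ⟨a, ⟨haX, haV⟩, rfl⟩
    exact ⟨⟨a, haX, rfl⟩, ⟨a, Or.inl (Or.inl haV), rfl⟩⟩
  · rintro ⟨h1, h2⟩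
    obtain ⟨t, htX, rfl⟩ := h1
    obtain ⟨s, hsO, hst⟩ := h2
    have htI : t ∈ Set.Ioo 0 (4*π) := hXsub htX
    rcases hsO with (hsV | ⟨⟨v, hvV, hveq⟩, hsI⟩) | ⟨⟨v, hvV, hveq⟩, hsI⟩
    · have hsI : s ∈ Set.Ioo 0 (4*π) := hV hsV
      rcases exp_eq_cases hsI htI hst with heq | h1 | h1
      · subst heq
        exact ⟨s, ⟨htX, hsV⟩, rfl⟩
      · have ht2 : t < 2*π := by linarith [hsI.2]
        have := hdown t htX ht2
        exact ⟨s, ⟨by rwa [h1], hsV⟩, hst⟩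
      · have ht2 : 2*π < t := by linarith [hsI.1]
        have := hup t htX ht2
        exact ⟨s, ⟨by rwa [h1], hsV⟩, hst⟩
    · change v + 2*π = s at hveq
      subst hveq
      rcases exp_eq_cases ⟨by linarith [hsI.1], hsI.2⟩ htI hst with heq | h1 | h1
      · have ht2 : 2*π < t := by rw [← heq]; exact hsI.1
        have hmem := hup t htX ht2
        have hv' : t - 2*π = v := by linarith
        refine ⟨v, ⟨by rwa [hv'] at hmem, hvV⟩, ?_⟩
        rw [← hv']
        exact Circle.exp_sub_two_pi t
      · have hveq2 : t = v := by linarith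
        exact ⟨t, ⟨htX, hveq2 ▸ hvV⟩, rfl⟩
      · have hv0 : 0 < v := (hV hvV).1
        exact absurd htI.2 (by push_neg; linarith)
    · change v - 2*π = s at hveq
      subst hveq
      rcases exp_eq_cases ⟨hsI.1, by linarith [hsI.2]⟩ htI hst with heq | h1 | h1
      · have ht2 : t < 2*π := by rw [← heq]; exact hsI.2
        have hmem := hdown t htX ht2
        have hv' : t + 2*π = v := by linarith
        refine ⟨v, ⟨by rwa [hv'] at hmem, hvV⟩, ?_⟩
        rw [← hv']
        exact Circle.exp_add_two_pi t
      · have hv4 : v < 4*π := (hV hvV).2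
        exact absurd htI.1 (by push_neg; linarith)
      · have hveq2 : t = v := by linarith
        exact ⟨t, ⟨htX, hveq2 ▸ hvV⟩, rfl⟩

open Real in
theorem cantor_restriction_not_coveringMap :
    ∀ (Xset : Set ℝ), Xset =
        ((fun c : ℝ => 2 * π * c) '' cantorSet ∪
          (fun c : ℝ => 2 * π * c + 2 * π) '' cantorSet) \ {0, 4 * π} →
    ∀ (σ : Xset → (Circle.exp '' Xset : Set Circle)),
      (∀ x : Xset, (σ x : Circle) = Circle.exp (x : ℝ)) →
      Function.Surjective σ ∧ IsLocalHomeomorph σ ∧ ¬ IsCoveringMap σ := by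
  intro Xset hX σ hσ
  have hπ : 0 < π := Real.pi_pos
  -- replace σ by the explicit function
  have hσeq : σ = fun x : Xset =>
      (⟨Circle.exp (x : ℝ), Set.mem_image_of_mem _ x.2⟩ : (Circle.exp '' Xset : Set Circle)) :=
    funext fun x => Subtype.ext (hσ x)
  -- basic facts about Xset
  have hXsub : Xset ⊆ Set.Ioo 0 (4*π) := by
    intro x hx
    rw [hX] at hx
    obtain ⟨hmem, hne⟩ := hx
    simp only [Set.mem_insert_iff, Set.mem_singleton_iff, not_or] at hne
    rcases hmem with ⟨c, hc, rfl⟩ | ⟨c, hc, rfl⟩ <;>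
      obtain ⟨hc0, hc1⟩ := cantorSet_subset_unitInterval hc <;>
      beta_reduce at hne ⊢
    · constructor
      · rcases lt_or_eq_of_le (by nlinarith : (0:ℝ) ≤ 2*π*c) with h | h
        · exact h
        · exact absurd h.symm hne.1
      · nlinarith
    · constructor
      · nlinarith
      · rcases lt_or_eq_of_le (by nlinarith : 2*π*c + 2*π ≤ 4*π) with h | h
        · exact h
        · exact absurd h hne.2
  have hup : ∀ x ∈ Xset, 2*π < x → x - 2*π ∈ Xset := by
    intro x hx hlt
    rw [hX] at hx ⊢
    obtain ⟨hmem, _⟩ := hx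
    rcases hmem with ⟨c, hc, rfl⟩ | ⟨c, hc, rfl⟩ <;>
      obtain ⟨hc0, hc1⟩ := cantorSet_subset_unitInterval hc <;>
      beta_reduce at hlt ⊢
    · exfalso; nlinarith
    · refine ⟨Or.inl ⟨c, hc, by ring⟩, ?_⟩
      simp only [Set.mem_insert_iff, Set.mem_singleton_iff, not_or]
      constructor <;> intro h <;> nlinarith
  have hdown : ∀ x ∈ Xset, x < 2*π → x + 2*π ∈ Xset := by
    intro x hx hlt
    rw [hX] at hx ⊢
    obtain ⟨hmem, hne⟩ := hx
    simp only [Set.mem_insert_iff, Set.mem_singleton_iff, not_or] at hne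
    rcases hmem with ⟨c, hc, rfl⟩ | ⟨c, hc, rfl⟩ <;>
      obtain ⟨hc0, hc1⟩ := cantorSet_subset_unitInterval hc <;>
      beta_reduce at hlt ⊢
    · refine ⟨Or.inr ⟨c, hc, rfl⟩, ?_⟩
      simp only [Set.mem_insert_iff, Set.mem_singleton_iff, not_or]
      constructor <;> intro h <;> nlinarith
    · exfalso; nlinarith
  -- σ is continuous
  have hcont : Continuous σ := by
    rw [hσeq]
    exact Continuous.subtype_mk (Circle.exp.continuous.comp continuous_subtype_val) _
  -- σ is an open map
  have hopen : IsOpenMap σ := by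
    intro U hU
    obtain ⟨V₀, hV₀o, rfl⟩ := isOpen_induced_iff.mp hU
    set V : Set ℝ := V₀ ∩ Set.Ioo 0 (4*π) with hVdef
    have hVo : IsOpen V := hV₀o.inter isOpen_Ioo
    have hVsub : V ⊆ Set.Ioo 0 (4*π) := Set.inter_subset_right
    set O : Set ℝ := V ∪ ((fun t => t + 2*π) '' V ∩ Set.Ioo (2*π) (4*π))
         ∪ ((fun t => t - 2*π) '' V ∩ Set.Ioo 0 (2*π)) with hOdef
    have hOo : IsOpen O := by
      apply IsOpen.union
      apply IsOpen.union
      · exact hVo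
      · exact (((Homeomorph.addRight (2*π)).isOpenMap V hVo).inter isOpen_Ioo)
      · exact (((Homeomorph.subRight (2*π)).isOpenMap V hVo).inter isOpen_Ioo)
    have hkey := key_open Xset hXsub hup hdown V hVsub
    have himg : σ '' (Subtype.val ⁻¹' V₀) = Subtype.val ⁻¹' (Circle.exp '' O) := by
      ext z
      constructor
      · rintro ⟨x, hxU, rfl⟩
        have hxV : (x : ℝ) ∈ V := ⟨hxU, hXsub x.2⟩
        have : (σ x : Circle) ∈ Circle.exp '' O := ⟨(x : ℝ), Or.inl (Or.inl hxV), (hσ x).symm⟩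
        exact this
      · intro hz
        have hz2 : (z : Circle) ∈ Circle.exp '' (Xset ∩ V) := by
          rw [hkey]; exact ⟨z.2, hz⟩
        obtain ⟨a, ⟨haX, haV⟩, ha⟩ := hz2
        exact ⟨⟨a, haX⟩, haV.1, Subtype.ext ((hσ ⟨a, haX⟩).trans ha)⟩
    rw [himg]
    exact (isLocalHomeomorph_circleExp.isOpenMap O hOo).preimage continuous_subtype_val
  refine ⟨?_, ?_, ?_⟩
  · -- surjective
    rintro ⟨y, hy⟩
    obtain ⟨t, ht, rfl⟩ := hy
    exact ⟨⟨t, ht⟩, Subtype.ext (hσ ⟨t, ht⟩)⟩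
  · -- local homeomorphism
    rw [isLocalHomeomorph_iff_isOpenEmbedding_restrict]
    intro x
    refine ⟨Subtype.val ⁻¹' Set.Ioo ((x:ℝ) - π) ((x:ℝ) + π), ?_, ?_⟩
    · exact (isOpen_Ioo.preimage continuous_subtype_val).mem_nhds
        ⟨by linarith, by linarith⟩
    · apply IsOpenEmbedding.of_continuous_injective_isOpenMap
      · exact hcont.comp continuous_subtype_val
      · rintro ⟨a, ha⟩ ⟨b, hb⟩ hab
        simp only [Set.restrict_apply] at hab
        have hexp : Circle.exp ((a : ℝ)) = Circle.exp ((b : ℝ)) := by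
          have := congrArg Subtype.val hab
          rwa [hσ, hσ] at this
        have haI : (a : ℝ) ∈ Set.Ioo 0 (4*π) := hXsub a.2
        have hbI : (b : ℝ) ∈ Set.Ioo 0 (4*π) := hXsub b.2
        have ha' : (a : ℝ) ∈ Set.Ioo ((x:ℝ) - π) ((x:ℝ) + π) := ha
        have hb' : (b : ℝ) ∈ Set.Ioo ((x:ℝ) - π) ((x:ℝ) + π) := hb
        have : (a : ℝ) = (b : ℝ) := by
          rcases exp_eq_cases haI hbI hexp with h | h | h
          · exact h
          · exfalso; obtain ⟨h1, h2⟩ := ha'; obtain ⟨h3, h4⟩ := hb'; linarith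
          · exfalso; obtain ⟨h1, h2⟩ := ha'; obtain ⟨h3, h4⟩ := hb'; linarith
        exact Subtype.ext (Subtype.ext this)
      · exact hopen.restrict (isOpen_Ioo.preimage continuous_subtype_val)
  · -- not a covering map
    intro hcov
    have h2π : (2*π : ℝ) ∈ Xset := by
      rw [hX]
      refine ⟨Or.inl ⟨1, one_mem_cantorSet, by ring⟩, ?_⟩
      simp only [Set.mem_insert_iff, Set.mem_singleton_iff, not_or]
      constructor <;> intro h <;> nlinarith
    set y₀ : (Circle.exp '' Xset : Set Circle) :=
      ⟨Circle.exp (2*π), Set.mem_image_of_mem _ h2π⟩ with hy₀def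
    have hcy := hcov y₀
    have : Nonempty ↥(σ ⁻¹' {y₀}) := ⟨⟨⟨2*π, h2π⟩, Subtype.ext (hσ ⟨2*π, h2π⟩)⟩⟩
    have hdisc := hcy.1
    let tr := hcy.toTrivialization
    have htr : y₀ ∈ tr.baseSet := hcy.mem_toTrivialization_baseSet
    -- the fiber over y₀ is {2π}
    have fib_eq : ∀ u : Xset, σ u = y₀ → (u : ℝ) = 2*π := by
      intro u hu
      have hexp : Circle.exp ((u : ℝ)) = Circle.exp (2*π) := by
        have := congrArg Subtype.val hu
        rwa [hσ] at this
      have huI : (u : ℝ) ∈ Set.Ioo 0 (4*π) := hXsub u.2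
      rcases exp_eq_cases huI ⟨by linarith, by linarith⟩ hexp with h | h | h
      · exact h
      · exfalso; linarith [huI.2]
      · exfalso; linarith [huI.1]
    have hsub : Subsingleton ↥(σ ⁻¹' {y₀}) := by
      constructor
      rintro ⟨u, hu⟩ ⟨v, hv⟩
      have h1 : (u : ℝ) = 2*π := fib_eq u hu
      have h2 : (v : ℝ) = 2*π := fib_eq v hv
      exact Subtype.ext (Subtype.ext (h1.trans h2.symm))
    -- injectivity on the preimage of the base set
    have hinj : ∀ a b : Xset, σ a ∈ tr.baseSet → σ b ∈ tr.baseSet → σ a = σ b → a = b := by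
      intro a b ha hb hab
      have hsa : a ∈ tr.source := tr.mem_source.mpr ha
      have hsb : b ∈ tr.source := tr.mem_source.mpr hb
      have h1 : tr a = tr b := by
        have hfst : (tr a).1 = (tr b).1 := by
          rw [tr.coe_fst hsa, tr.coe_fst hsb]; exact hab
        have hsnd : (tr a).2 = (tr b).2 := @Subsingleton.elim _ hsub _ _
        exact Prod.ext hfst hsnd
      have := tr.toOpenPartialHomeomorph.injOn hsa hsb
      rw [tr.coe_coe] at this
      exact this h1
    -- a sequence in Xset approaching 2π from above modulo 2π
    have hmem1 : ∀ n : ℕ, 2*π*((3:ℝ)⁻¹)^(n+1) ∈ Xset := by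
      intro n
      rw [hX]
      obtain ⟨hc0, hc1⟩ := cantorSet_subset_unitInterval (pow_three_inv_mem_cantorSet (n+1))
      have hcpos : (0:ℝ) < (3⁻¹ : ℝ)^(n+1) := pow_pos (by norm_num) _
      refine ⟨Or.inl ⟨((3:ℝ)⁻¹)^(n+1), pow_three_inv_mem_cantorSet (n+1), rfl⟩, ?_⟩
      simp only [Set.mem_insert_iff, Set.mem_singleton_iff, not_or]
      constructor <;> intro h <;> nlinarith
    have hmem2 : ∀ n : ℕ, 2*π*((3:ℝ)⁻¹)^(n+1) + 2*π ∈ Xset := by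
      intro n
      rw [hX]
      obtain ⟨hc0, hc1⟩ := cantorSet_subset_unitInterval (pow_three_inv_mem_cantorSet (n+1))
      have hclt : ((3:ℝ)⁻¹)^(n+1) < 1 := by
        have : ((3:ℝ)⁻¹)^(n+1) ≤ ((3:ℝ)⁻¹)^1 :=
          pow_le_pow_of_le_one (by norm_num) (by norm_num) (by omega)
        simpa using lt_of_le_of_lt this (by norm_num)
      refine ⟨Or.inr ⟨((3:ℝ)⁻¹)^(n+1), pow_three_inv_mem_cantorSet (n+1), rfl⟩, ?_⟩
      simp only [Set.mem_insert_iff, Set.mem_singleton_iff, not_or]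
      constructor <;> intro h <;> nlinarith
    -- the sequence σ ⟨x₂ n⟩ tends to y₀
    have htend : Filter.Tendsto (fun n : ℕ => σ ⟨2*π*((3:ℝ)⁻¹)^(n+1) + 2*π, hmem2 n⟩)
        Filter.atTop (nhds y₀) := by
      rw [tendsto_subtype_rng]
      simp only [hσ]
      have hreal : Filter.Tendsto (fun n : ℕ => 2*π*((3:ℝ)⁻¹)^(n+1) + 2*π)
          Filter.atTop (nhds (2*π)) := by
        have h0 : Filter.Tendsto (fun n : ℕ => ((3:ℝ)⁻¹)^(n+1)) Filter.atTop (nhds 0) := by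
          have := tendsto_pow_atTop_nhds_zero_of_lt_one
            (by norm_num : (0:ℝ) ≤ 3⁻¹) (by norm_num : (3:ℝ)⁻¹ < 1)
          exact this.comp (tendsto_add_atTop_nat 1)
        have : Filter.Tendsto (fun n : ℕ => 2*π*((3:ℝ)⁻¹)^(n+1) + 2*π)
            Filter.atTop (nhds (2*π*0 + 2*π)) :=
          ((tendsto_const_nhds.mul h0).add tendsto_const_nhds)
        simpa using this
      exact (Circle.exp.continuous.tendsto (2*π)).comp hreal
    have hev : ∀ᶠ n in Filter.atTop,
        σ ⟨2*π*((3:ℝ)⁻¹)^(n+1) + 2*π, hmem2 n⟩ ∈ tr.baseSet :=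
      htend.eventually (tr.open_baseSet.mem_nhds htr)
    obtain ⟨n, hn⟩ := hev.exists
    -- the two points with the same image
    have heq : σ ⟨2*π*((3:ℝ)⁻¹)^(n+1), hmem1 n⟩ = σ ⟨2*π*((3:ℝ)⁻¹)^(n+1) + 2*π, hmem2 n⟩ := by
      refine Subtype.ext ?_
      rw [hσ, hσ]
      exact (Circle.exp_add_two_pi _).symm
    have := hinj _ _ (heq ▸ hn) hn heq
    have hval : 2*π*((3:ℝ)⁻¹)^(n+1) = 2*π*((3:ℝ)⁻¹)^(n+1) + 2*π :=
      congrArg Subtype.val this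
    linarith
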